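/- For any binary classification model with outputs in {0,1}, the population accuracy E[y·f̂(x) + (1−y)(1−f̂(x))] equals 2σ_{y,f̂(x)} + 2P(y=1)·E[f̂(x)] + 1 − P(y=1) − E[f̂(x)], and the benchmark obtained by treating y independent of x equals 2P(y=1)·E[f̂(x)] + 1 − P(y=1) − E[f̂(x)]; hence the sum of all XPER feature contributions to accuracy equals 2σ_{y,f̂(x)} = 2·Cov(y, f̂(x)). -/

import Mathlib

open MeasureTheory

noncomputable def cov {Ω : Type*} [MeasurableSpace Ω] (μ : Measure Ω) (f g : Ω → ℝ) : ℝ :=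
  ∫ ω, (f ω - ∫ ω', f ω' ∂μ) * (g ω - ∫ ω', g ω' ∂μ) ∂μ

/-- For a binary classification model with `{0,1}`-valued target `y` and classifier output
`f̂(x)`, the population accuracy `E[y f̂ + (1−y)(1−f̂)]` equals
`2σ_{y,f̂} + 2P(y=1)E[f̂] + 1 − P(y=1) − E[f̂]`; the independence benchmark (with `y`
independent of `x`) equals `2P(y=1)E[f̂] + 1 − P(y=1) − E[f̂]`; hence the sum of all XPER
feature contributions to the accuracy, `E G − φ₀`, equals `2·Cov(y, f̂(x))`. -/
theorem accuracy_efficiency_decomposition {Ω : Type*} [MeasurableSpace Ω] (μ : Measure Ω)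
    [IsProbabilityMeasure μ] (y f : Ω → ℝ)
    (hym : Measurable y) (hfm : Measurable f)
    (hy01 : ∀ ω, y ω = 0 ∨ y ω = 1) (hf01 : ∀ ω, f ω = 0 ∨ f ω = 1) :
    (∫ ω, (y ω * f ω + (1 - y ω) * (1 - f ω)) ∂μ)
        = 2 * cov μ y f + 2 * (μ {ω | y ω = 1}).toReal * (∫ ω, f ω ∂μ)
          + 1 - (μ {ω | y ω = 1}).toReal - (∫ ω, f ω ∂μ)
      ∧ (∫ p : Ω × Ω, (y p.1 * f p.2 + (1 - y p.1) * (1 - f p.2)) ∂(μ.prod μ))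
        = 2 * (μ {ω | y ω = 1}).toReal * (∫ ω, f ω ∂μ)
          + 1 - (μ {ω | y ω = 1}).toReal - (∫ ω, f ω ∂μ)
      ∧ (∫ ω, (y ω * f ω + (1 - y ω) * (1 - f ω)) ∂μ)
          - (∫ p : Ω × Ω, (y p.1 * f p.2 + (1 - y p.1) * (1 - f p.2)) ∂(μ.prod μ))
        = 2 * cov μ y f := by
  have hyb : ∀ ω, |y ω| ≤ 1 := fun ω => by rcases hy01 ω with h | h <;> simp [h]
  have hfb : ∀ ω, |f ω| ≤ 1 := fun ω => by rcases hf01 ω with h | h <;> simp [h]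
  have hIy : Integrable y μ :=
    (integrable_const (1:ℝ)).mono' hym.aestronglyMeasurable (ae_of_all _ hyb)
  have hIf : Integrable f μ :=
    (integrable_const (1:ℝ)).mono' hfm.aestronglyMeasurable (ae_of_all _ hfb)
  have hIyf : Integrable (fun ω => y ω * f ω) μ :=
    (integrable_const (1:ℝ)).mono' (hym.mul hfm).aestronglyMeasurable
      (ae_of_all _ fun ω => by
        rw [Real.norm_eq_abs, abs_mul]
        calc |y ω| * |f ω| ≤ 1 * 1 := mul_le_mul (hyb ω) (hfb ω) (abs_nonneg _) zero_le_one
        _ = 1 := by ring)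
  set Iy := ∫ ω, y ω ∂μ with hIydef
  set If := ∫ ω, f ω ∂μ with hIfdef
  set Iyf := ∫ ω, y ω * f ω ∂μ with hIyfdef
  -- P(y=1) = E[y]
  have hmeas : MeasurableSet {ω | y ω = 1} := hym (measurableSet_singleton 1)
  have hPy : (μ {ω | y ω = 1}).toReal = Iy := by
    have heq : y = Set.indicator {ω | y ω = 1} (fun _ => (1:ℝ)) := by
      funext ω
      rcases hy01 ω with h | h <;> simp [Set.indicator_apply, h]
    rw [hIydef]
    conv_rhs => rw [heq]
    rw [integral_indicator_const (1:ℝ) hmeas]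
    simp
    rfl
  -- covariance expansion
  have hcov : cov μ y f = Iyf - Iy * If := by
    unfold cov
    rw [← hIydef, ← hIfdef]
    have heq : (fun ω => (y ω - Iy) * (f ω - If))
        = fun ω => (y ω * f ω - Iy * f ω) - (If * y ω - If * Iy) := by
      funext ω; ring
    have hA : Integrable (fun ω => y ω * f ω - Iy * f ω) μ := hIyf.sub (hIf.const_mul Iy)
    have hB : Integrable (fun ω => If * y ω - If * Iy) μ :=
      (hIy.const_mul If).sub (integrable_const (If * Iy))
    rw [heq, integral_sub hA hB,
      integral_sub hIyf (hIf.const_mul Iy),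
      integral_sub (hIy.const_mul If) (integrable_const (If * Iy)),
      integral_const_mul, integral_const_mul, integral_const]
    simp only [← hIydef, ← hIfdef, ← hIyfdef, smul_eq_mul, measure_univ, ENNReal.toReal_one, probReal_univ]
    ring
  -- first equality
  have h1 : (∫ ω, (y ω * f ω + (1 - y ω) * (1 - f ω)) ∂μ) = 2 * Iyf - Iy - If + 1 := by
    have heq : (fun ω => (y ω * f ω + (1 - y ω) * (1 - f ω)))
        = fun ω => (2 * (y ω * f ω) - y ω) - (f ω - 1) := by
      funext ω; ring
    have hA : Integrable (fun ω => 2 * (y ω * f ω) - y ω) μ := (hIyf.const_mul 2).sub hIy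
    have hB : Integrable (fun ω => f ω - 1) μ := hIf.sub (integrable_const (1:ℝ))
    rw [heq, integral_sub hA hB,
      integral_sub (hIyf.const_mul 2) hIy, integral_sub hIf (integrable_const (1:ℝ)),
      integral_const_mul, integral_const]
    simp only [← hIydef, ← hIfdef, ← hIyfdef, smul_eq_mul, measure_univ, ENNReal.toReal_one, probReal_univ]
    ring
  -- integrability on product
  have hy1i : Integrable (fun p : Ω × Ω => y p.1) (μ.prod μ) := by
    exact (integrable_const (1:ℝ)).mono'
      (hym.comp measurable_fst).aestronglyMeasurable (ae_of_all _ fun p => hyb p.1)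
  have hf2i : Integrable (fun p : Ω × Ω => f p.2) (μ.prod μ) := by
    exact (integrable_const (1:ℝ)).mono'
      (hfm.comp measurable_snd).aestronglyMeasurable (ae_of_all _ fun p => hfb p.2)
  have hyf2i : Integrable (fun p : Ω × Ω => y p.1 * f p.2) (μ.prod μ) := by
    exact (integrable_const (1:ℝ)).mono'
      ((hym.comp measurable_fst).mul (hfm.comp measurable_snd)).aestronglyMeasurable
      (ae_of_all _ fun p => by
        rw [Real.norm_eq_abs, abs_mul]
        calc |y p.1| * |f p.2| ≤ 1 * 1 :=
          mul_le_mul (hyb p.1) (hfb p.2) (abs_nonneg _) zero_le_one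
        _ = 1 := by ring)
  have hprodint : (∫ p : Ω × Ω, y p.1 * f p.2 ∂(μ.prod μ)) = Iy * If :=
    integral_prod_mul y f
  have hy1int : (∫ p : Ω × Ω, y p.1 ∂(μ.prod μ)) = Iy := by
    have := integral_prod_mul (μ := μ) (ν := μ) y (fun _ => (1:ℝ))
    simpa using this
  have hf2int : (∫ p : Ω × Ω, f p.2 ∂(μ.prod μ)) = If := by
    have := integral_prod_mul (μ := μ) (ν := μ) (fun _ => (1:ℝ)) f
    simpa using this
  have h2 : (∫ p : Ω × Ω, (y p.1 * f p.2 + (1 - y p.1) * (1 - f p.2)) ∂(μ.prod μ))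
      = 2 * (Iy * If) - Iy - If + 1 := by
    have heq : (fun p : Ω × Ω => (y p.1 * f p.2 + (1 - y p.1) * (1 - f p.2)))
        = fun p => (2 * (y p.1 * f p.2) - y p.1) - (f p.2 - 1) := by
      funext p; ring
    have hA : Integrable (fun p : Ω × Ω => 2 * (y p.1 * f p.2) - y p.1) (μ.prod μ) :=
      (hyf2i.const_mul 2).sub hy1i
    have hB : Integrable (fun p : Ω × Ω => f p.2 - 1) (μ.prod μ) :=
      hf2i.sub (integrable_const (1:ℝ))
    rw [heq, integral_sub hA hB,
      integral_sub (hyf2i.const_mul 2) hy1i, integral_sub hf2i (integrable_const (1:ℝ)),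
      integral_const_mul, integral_const, hprodint, hy1int, hf2int]
    simp only [smul_eq_mul, measure_univ, ENNReal.toReal_one, probReal_univ]
    ring
  refine ⟨?_, ?_, ?_⟩
  · rw [h1, hcov, hPy]; ring
  · rw [h2, hPy]; ring
  · rw [h1, h2, hcov]; ring
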